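/- arXiv:1311.0433 — 3 statements merged into one kernel-verified Lean document; each statement's English description precedes it below -/
import Mathlib

section
/- Let T be the composition T^(K-1) ∘ ⋯ ∘ T^(1) on vectors of K positive reals, where each T^(j) uses a mapping Ω satisfying Ω(z1,z2)+z1z2/Ω(z1,z2) ≤ z1+z2 with equality iff z1=z2. Then F(T(x)) ≤ F(x) where F(x) = Σ x_k, and F(T(x)) = F(x) implies x_1 = x_2 = ⋯ = x_K. -/
/-- The elementary transformation `T^(j)` (0-based index `j`): replaces entries
`j` and `j+1` of `x` by `Ω (x j) (x (j+1))` and `x j * x (j+1) / Ω (x j) (x (j+1))`. -/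
noncomputable def Tj {K : ℕ} (Ω : ℝ → ℝ → ℝ) (j : ℕ) (x : Fin K → ℝ) : Fin K → ℝ :=
  fun k =>
    if h : j + 1 < K then
      if (k : ℕ) = j then Ω (x ⟨j, by omega⟩) (x ⟨j + 1, h⟩)
      else if (k : ℕ) = j + 1 then
        x ⟨j, by omega⟩ * x ⟨j + 1, h⟩ / Ω (x ⟨j, by omega⟩) (x ⟨j + 1, h⟩)
      else x k
    else x k

/-- The full sweep `T = T^(K-1) ∘ ⋯ ∘ T^(1)` (0-based: `j = 0, …, K-2`,
applied in increasing order of `j`). -/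
noncomputable def Tfull {K : ℕ} (Ω : ℝ → ℝ → ℝ) (x : Fin K → ℝ) : Fin K → ℝ :=
  (List.range (K - 1)).foldl (fun y j => Tj Ω j y) x

section Aux
variable {K : ℕ} (Ω : ℝ → ℝ → ℝ)
variable (hΩpos : ∀ z1 z2 : ℝ, 0 < z1 → 0 < z2 → 0 < Ω z1 z2)
variable (hΩ : ∀ z1 z2 : ℝ, 0 < z1 → 0 < z2 →
      Ω z1 z2 + z1 * z2 / Ω z1 z2 ≤ z1 + z2 ∧
      (Ω z1 z2 + z1 * z2 / Ω z1 z2 = z1 + z2 ↔ z1 = z2))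

include hΩpos hΩ in
lemma Tj_spec (j : ℕ) (hj : j + 1 < K) (y : Fin K → ℝ) (hy : ∀ k, 0 < y k) :
    (∀ k, 0 < Tj Ω j y k) ∧ ∑ k, Tj Ω j y k ≤ ∑ k, y k ∧
    (∑ k, Tj Ω j y k = ∑ k, y k →
      y ⟨j, by omega⟩ = y ⟨j + 1, hj⟩ ∧ Tj Ω j y = y) := by
  set a : Fin K := ⟨j, by omega⟩ with ha
  set b : Fin K := ⟨j + 1, hj⟩ with hb
  have hab : a ≠ b := by simp [ha, hb, Fin.ext_iff]
  have hΩab := hΩpos (y a) (y b) (hy a) (hy b)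
  have hTa : Tj Ω j y a = Ω (y a) (y b) := by simp [Tj, hj, ha, hb]
  have hTb : Tj Ω j y b = y a * y b / Ω (y a) (y b) := by simp [Tj, hj, ha, hb]
  have hTo : ∀ k : Fin K, k ≠ a → k ≠ b → Tj Ω j y k = y k := by
    intro k hka hkb
    have h1 : (k : ℕ) ≠ j := fun h => hka (Fin.ext h)
    have h2 : (k : ℕ) ≠ j + 1 := fun h => hkb (Fin.ext h)
    simp [Tj, hj, h1, h2]
  have hpos : ∀ k, 0 < Tj Ω j y k := by
    intro k
    by_cases h1 : k = a
    · rw [h1, hTa]; exact hΩab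
    · by_cases h2 : k = b
      · rw [h2, hTb]; exact div_pos (mul_pos (hy a) (hy b)) hΩab
      · rw [hTo k h1 h2]; exact hy k
  have hsumd : ∑ k, (Tj Ω j y k - y k) = (Ω (y a) (y b) + y a * y b / Ω (y a) (y b)) - (y a + y b) := by
    have hzero : ∀ k ∈ Finset.univ, k ∉ ({a, b} : Finset (Fin K)) → Tj Ω j y k - y k = 0 := by
      intro k _ hk
      simp only [Finset.mem_insert, Finset.mem_singleton, not_or] at hk
      rw [hTo k hk.1 hk.2]; ring
    rw [← Finset.sum_subset (Finset.subset_univ ({a, b} : Finset (Fin K))) hzero,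
      Finset.sum_pair hab, hTa, hTb]
    ring
  have hsum : ∑ k, Tj Ω j y k - ∑ k, y k
      = (Ω (y a) (y b) + y a * y b / Ω (y a) (y b)) - (y a + y b) := by
    rw [← Finset.sum_sub_distrib, hsumd]
  have hle := (hΩ (y a) (y b) (hy a) (hy b)).1
  refine ⟨hpos, by linarith, ?_⟩
  intro heq
  have heq2 : Ω (y a) (y b) + y a * y b / Ω (y a) (y b) = y a + y b := by
    have := hsum; rw [heq] at this; linarith
  have hyab : y a = y b := (hΩ (y a) (y b) (hy a) (hy b)).2.mp heq2
  have hΩaa : Ω (y a) (y b) = y a := by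
    have h2 : Ω (y a) (y b) + y a * y b / Ω (y a) (y b) = 2 * y a := by
      rw [heq2, ← hyab]; ring
    have hne : Ω (y a) (y b) ≠ 0 := ne_of_gt hΩab
    have h3 : Ω (y a) (y b) * Ω (y a) (y b) + y a * y b = 2 * y a * Ω (y a) (y b) := by
      field_simp at h2
      linarith
    nlinarith [sq_nonneg (Ω (y a) (y b) - y a), hyab]
  refine ⟨hyab, funext fun k => ?_⟩
  by_cases h1 : k = a
  · rw [h1, hTa, hΩaa]
  · by_cases h2 : k = b
    · rw [h2, hTb, hΩaa, ← hyab, mul_div_assoc, div_self (ne_of_gt (hy a)), mul_one]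
    · exact hTo k h1 h2

include hΩpos hΩ in
lemma fold_spec (x : Fin K → ℝ) (hx : ∀ k, 0 < x k) :
    ∀ m, m + 1 ≤ K →
    (∀ k, 0 < (List.range m).foldl (fun y j => Tj Ω j y) x k) ∧
    ∑ k, (List.range m).foldl (fun y j => Tj Ω j y) x k ≤ ∑ k, x k ∧
    (∑ k, (List.range m).foldl (fun y j => Tj Ω j y) x k = ∑ k, x k →
      (List.range m).foldl (fun y j => Tj Ω j y) x = x ∧
      ∀ j (hj : j + 1 < K), j < m → x ⟨j, by omega⟩ = x ⟨j + 1, hj⟩) := by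
  intro m
  induction m with
  | zero =>
    intro _
    simp only [List.range_zero, List.foldl_nil]
    exact ⟨hx, le_refl _, fun _ => ⟨trivial, fun j hj h => absurd h (Nat.not_lt_zero j)⟩⟩
  | succ m ih =>
    intro hm
    have hm' : m + 1 ≤ K := by omega
    obtain ⟨ihpos, ihle, iheq⟩ := ih hm'
    set y := (List.range m).foldl (fun y j => Tj Ω j y) x with hy
    have hstep : (List.range (m + 1)).foldl (fun y j => Tj Ω j y) x = Tj Ω m y := by
      rw [List.range_succ, List.foldl_append]
      rfl
    have hjm : m + 1 < K := by omega
    obtain ⟨spos, sle, seq⟩ := Tj_spec Ω hΩpos hΩ m hjm y ihpos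
    rw [hstep]
    refine ⟨spos, le_trans sle ihle, ?_⟩
    intro heq
    have hsy : ∑ k, y k = ∑ k, x k := le_antisymm ihle (heq ▸ sle)
    obtain ⟨hyx, hchain⟩ := iheq hsy
    obtain ⟨hab, hfix⟩ := seq (by rw [heq, hsy])
    refine ⟨by rw [hfix, hyx], ?_⟩
    intro j hj hjlt
    rcases Nat.lt_or_ge j m with h | h
    · exact hchain j hj h
    · have : j = m := by omega
      subst this
      rw [hyx] at hab
      exact hab

end Aux

theorem T_sum_decrease_and_equality (K : ℕ) (hK : 2 ≤ K)
    (x : Fin K → ℝ) (hx : ∀ k, 0 < x k)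
    (Ω : ℝ → ℝ → ℝ)
    (hΩpos : ∀ z1 z2 : ℝ, 0 < z1 → 0 < z2 → 0 < Ω z1 z2)
    (hΩ : ∀ z1 z2 : ℝ, 0 < z1 → 0 < z2 →
      Ω z1 z2 + z1 * z2 / Ω z1 z2 ≤ z1 + z2 ∧
      (Ω z1 z2 + z1 * z2 / Ω z1 z2 = z1 + z2 ↔ z1 = z2)) :
    ∑ k, Tfull Ω x k ≤ ∑ k, x k ∧
    (∑ k, Tfull Ω x k = ∑ k, x k → ∀ k k' : Fin K, x k = x k') := by
  obtain ⟨_, hle, heq⟩ := fold_spec Ω hΩpos hΩ x hx (K - 1) (by omega)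
  simp only [Tfull]
  refine ⟨hle, ?_⟩
  intro hsum k k'
  obtain ⟨_, hchain⟩ := heq hsum
  have key : ∀ i (hi : i < K), x ⟨i, hi⟩ = x ⟨0, by omega⟩ := by
    intro i
    induction i with
    | zero => intro _; rfl
    | succ n ihn =>
      intro hi
      have h1 : n < K := by omega
      rw [← hchain n hi (by omega)]
      exact ihn h1
  have hk := key k k.isLt
  have hk' := key k' k'.isLt
  simp only [Fin.eta] at hk hk'
  rw [hk, hk']
end

section
/- With T as the composition of the T^(j) maps using the harmonic mean Ω_HM(z1,z2)=2z1z2/(z1+z2), the sequence y_ℓ = F(T^ℓ(x)) of sums of entries of iterates is monotonically nonincreasing and bounded below by K·(∏ x_k)^(1/K), hence convergent. -/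
/-- The full sweep `T` using the harmonic mean `Ω_HM`. -/
noncomputable def THM {K : ℕ} (x : Fin K → ℝ) : Fin K → ℝ :=
  (List.range (K - 1)).foldl (fun y j => Tj (fun z1 z2 => 2 * z1 * z2 / (z1 + z2)) j y) x

private lemma Tj_hm_eq {K : ℕ} (j : ℕ) (h : j + 1 < K) (y : Fin K → ℝ)
    (hy : ∀ k, 0 < y k) :
    Tj (fun z1 z2 => 2 * z1 * z2 / (z1 + z2)) j y =
      Function.update (Function.update y ⟨j + 1, h⟩
        ((y ⟨j, by omega⟩ + y ⟨j + 1, h⟩) / 2)) ⟨j, by omega⟩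
        (2 * y ⟨j, by omega⟩ * y ⟨j + 1, h⟩ / (y ⟨j, by omega⟩ + y ⟨j + 1, h⟩)) := by
  set a := y ⟨j, by omega⟩
  set b := y ⟨j + 1, h⟩
  have ha : 0 < a := hy _
  have hb : 0 < b := hy _
  have hab : a + b ≠ 0 := by positivity
  funext k
  simp only [Tj, dif_pos h, Function.update]
  by_cases h1 : (k : ℕ) = j
  · have : k = (⟨j, by omega⟩ : Fin K) := by exact Fin.ext h1
    simp [h1, this]
    rfl
  · by_cases h2 : (k : ℕ) = j + 1
    · have hk2 : k = (⟨j + 1, h⟩ : Fin K) := Fin.ext h2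
      have hk1 : k ≠ (⟨j, by omega⟩ : Fin K) := by
        simp [Fin.ext_iff]; omega
      rw [if_neg h1, if_pos h2, dif_neg hk1]
      subst hk2
      simp only [dif_pos]
      change a * b / (2 * a * b / (a + b)) = (a + b) / 2
      field_simp
    · have hk1 : k ≠ (⟨j, by omega⟩ : Fin K) := by simp [Fin.ext_iff, h1]
      have hk2 : k ≠ (⟨j + 1, h⟩ : Fin K) := by simp [Fin.ext_iff, h2]
      simp [h1, h2, hk1, hk2]

private lemma Tj_step {K : ℕ} (j : ℕ) (y : Fin K → ℝ) (hy : ∀ k, 0 < y k) :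
    (∀ k, 0 < Tj (fun z1 z2 => 2 * z1 * z2 / (z1 + z2)) j y k) ∧
    (∏ k, Tj (fun z1 z2 => 2 * z1 * z2 / (z1 + z2)) j y k = ∏ k, y k) ∧
    (∑ k, Tj (fun z1 z2 => 2 * z1 * z2 / (z1 + z2)) j y k ≤ ∑ k, y k) := by
  by_cases h : j + 1 < K
  · set j0 : Fin K := ⟨j, by omega⟩
    set j1 : Fin K := ⟨j + 1, h⟩
    set a := y j0
    set b := y j1
    have ha : 0 < a := hy _
    have hb : 0 < b := hy _
    have hab : (0:ℝ) < a + b := by positivity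
    have hne : j0 ≠ j1 := by simp [j0, j1, Fin.ext_iff]
    rw [Tj_hm_eq j h y hy]
    refine ⟨?_, ?_, ?_⟩
    · intro k
      rcases eq_or_ne k j0 with rfl | hk0
      · simp only [j0, Function.update_self]; positivity
      · rw [Function.update_of_ne hk0]
        rcases eq_or_ne k j1 with rfl | hk1
        · simp only [j1, Function.update_self]; positivity
        · rw [Function.update_of_ne hk1]; exact hy k
    · rw [Finset.prod_update_of_mem (Finset.mem_univ _), Finset.sdiff_singleton_eq_erase,
        Finset.prod_update_of_mem (by simp [hne.symm] : j1 ∈ Finset.univ.erase j0),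
        Finset.sdiff_singleton_eq_erase]
      have hsplit : ∏ k, y k = a * (b * ∏ k ∈ (Finset.univ.erase j0).erase j1, y k) := by
        rw [← Finset.mul_prod_erase _ _ (Finset.mem_univ j0),
          ← Finset.mul_prod_erase _ _ (by simp [hne.symm] : j1 ∈ Finset.univ.erase j0)]
      rw [hsplit]
      have : 2 * a * b / (a + b) * ((a + b) / 2) = a * b := by field_simp
      rw [← mul_assoc, ← mul_assoc, this, mul_assoc]
    · rw [Finset.sum_update_of_mem (Finset.mem_univ _), Finset.sdiff_singleton_eq_erase,
        Finset.sum_update_of_mem (by simp [hne.symm] : j1 ∈ Finset.univ.erase j0),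
        Finset.sdiff_singleton_eq_erase]
      have hsplit : ∑ k, y k = a + (b + ∑ k ∈ (Finset.univ.erase j0).erase j1, y k) := by
        rw [← Finset.add_sum_erase _ _ (Finset.mem_univ j0),
          ← Finset.add_sum_erase _ _ (by simp [hne.symm] : j1 ∈ Finset.univ.erase j0)]
      rw [hsplit]
      have hhm : 2 * a * b / (a + b) ≤ (a + b) / 2 := by
        rw [div_le_div_iff₀ hab (by norm_num)]
        nlinarith [sq_nonneg (a - b)]
      linarith
  · have : Tj (fun z1 z2 => 2 * z1 * z2 / (z1 + z2)) j y = y := by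
      funext k; simp [Tj, h]
    rw [this]
    exact ⟨hy, rfl, le_refl _⟩

private lemma foldl_step {K : ℕ} (L : List ℕ) :
    ∀ y : Fin K → ℝ, (∀ k, 0 < y k) →
    (∀ k, 0 < (L.foldl (fun y j => Tj (fun z1 z2 => 2 * z1 * z2 / (z1 + z2)) j y) y) k) ∧
    (∏ k, (L.foldl (fun y j => Tj (fun z1 z2 => 2 * z1 * z2 / (z1 + z2)) j y) y) k = ∏ k, y k) ∧
    (∑ k, (L.foldl (fun y j => Tj (fun z1 z2 => 2 * z1 * z2 / (z1 + z2)) j y) y) k ≤ ∑ k, y k) := by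
  induction L with
  | nil => intro y hy; exact ⟨hy, rfl, le_refl _⟩
  | cons j L ih =>
    intro y hy
    obtain ⟨h1, h2, h3⟩ := Tj_step j y hy
    obtain ⟨g1, g2, g3⟩ := ih _ h1
    exact ⟨g1, by rw [List.foldl_cons] at *; rw [g2, h2], by
      simp only [List.foldl_cons]; exact le_trans g3 h3⟩

private lemma THM_step {K : ℕ} (y : Fin K → ℝ) (hy : ∀ k, 0 < y k) :
    (∀ k, 0 < THM y k) ∧ (∏ k, THM y k = ∏ k, y k) ∧ (∑ k, THM y k ≤ ∑ k, y k) :=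
  foldl_step _ y hy

theorem THM_iterates_convergent (K : ℕ) (hK : 2 ≤ K)
    (x : Fin K → ℝ) (hx : ∀ k, 0 < x k) :
    Antitone (fun ℓ : ℕ => ∑ k, (THM^[ℓ] x) k) ∧
    (∀ ℓ : ℕ, (K : ℝ) * (∏ k, x k) ^ ((1 : ℝ) / K) ≤ ∑ k, (THM^[ℓ] x) k) ∧
    ∃ y : ℝ, Filter.Tendsto (fun ℓ : ℕ => ∑ k, (THM^[ℓ] x) k) Filter.atTop (nhds y) := by
  have key : ∀ ℓ : ℕ, (∀ k, 0 < (THM^[ℓ] x) k) ∧ (∏ k, (THM^[ℓ] x) k = ∏ k, x k) := by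
    intro ℓ
    induction ℓ with
    | zero => simp [hx]
    | succ n ih =>
      rw [Function.iterate_succ_apply']
      obtain ⟨h1, h2, _⟩ := THM_step _ ih.1
      exact ⟨h1, h2.trans ih.2⟩
  have hmono : Antitone (fun ℓ : ℕ => ∑ k, (THM^[ℓ] x) k) := by
    apply antitone_nat_of_succ_le
    intro n
    rw [Function.iterate_succ_apply']
    exact (THM_step _ (key n).1).2.2
  have hKpos : (0:ℝ) < K := by positivity
  have hbdd : ∀ ℓ : ℕ, (K : ℝ) * (∏ k, x k) ^ ((1 : ℝ) / K) ≤ ∑ k, (THM^[ℓ] x) k := by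
    intro ℓ
    obtain ⟨hpos, hprod⟩ := key ℓ
    set z := THM^[ℓ] x
    have hamgm := Real.geom_mean_le_arith_mean_weighted Finset.univ
      (fun _ : Fin K => (1:ℝ) / K) z (fun _ _ => by positivity)
      (by simp [Finset.card_univ]; field_simp)
      (fun i _ => (hpos i).le)
    have hp : (∏ k, x k) ^ ((1:ℝ) / K) = ∏ k, z k ^ ((1:ℝ)/K) := by
      rw [Real.finset_prod_rpow _ _ (fun i _ => (hpos i).le), hprod]
    rw [hp]
    have : ∑ i, (1:ℝ) / K * z i = (1 / K) * ∑ i, z i := by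
      rw [Finset.mul_sum]
    rw [this] at hamgm
    calc (K:ℝ) * ∏ k, z k ^ ((1:ℝ)/K) ≤ (K:ℝ) * ((1 / K) * ∑ i, z i) := by
          exact mul_le_mul_of_nonneg_left hamgm hKpos.le
      _ = ∑ i, z i := by field_simp
  refine ⟨hmono, hbdd, ?_⟩
  refine ⟨_, tendsto_atTop_ciInf hmono ⟨(K : ℝ) * (∏ k, x k) ^ ((1 : ℝ) / K), ?_⟩⟩
  rintro v ⟨ℓ, rfl⟩
  exact hbdd ℓ
end

section
/- Let Σ = diag(σ1, σ2) with σ1 ≥ σ2 > 0 and let ω satisfy σ2 ≤ ω ≤ σ1. Define c = √((ω² − σ2²)/(σ1² − σ2²)) (when σ1 > σ2), s = √(1−c²), Φ_L = (1/ω)·[[c σ1, s σ2],[−s σ2, c σ1]], and Φ_R = [[c, −s],[s, c]]. Then Φ_L Σ Φ_R is upper triangular with diagonal entries ω and σ1σ2/ω. -/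
open Matrix

theorem planar_rotation_triangularize (σ1 σ2 ω : ℝ)
    (hσ2 : 0 < σ2) (hσ : σ2 < σ1) (hω1 : σ2 ≤ ω) (hω2 : ω ≤ σ1) :
    let c : ℝ := Real.sqrt ((ω ^ 2 - σ2 ^ 2) / (σ1 ^ 2 - σ2 ^ 2))
    let s : ℝ := Real.sqrt (1 - c ^ 2)
    let ΦL : Matrix (Fin 2) (Fin 2) ℝ :=
      (1 / ω) • !![c * σ1, s * σ2; -(s * σ2), c * σ1]
    let ΦR : Matrix (Fin 2) (Fin 2) ℝ := !![c, -s; s, c]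
    let Sig : Matrix (Fin 2) (Fin 2) ℝ := !![σ1, 0; 0, σ2]
    (ΦL * Sig * ΦR) 1 0 = 0 ∧ (ΦL * Sig * ΦR) 0 0 = ω ∧
      (ΦL * Sig * ΦR) 1 1 = σ1 * σ2 / ω := by
  intro c s ΦL ΦR Sig
  have hω : 0 < ω := lt_of_lt_of_le hσ2 hω1
  have hd : 0 < σ1 ^ 2 - σ2 ^ 2 := by nlinarith
  have hn : 0 ≤ ω ^ 2 - σ2 ^ 2 := by nlinarith
  have hc2 : c ^ 2 = (ω ^ 2 - σ2 ^ 2) / (σ1 ^ 2 - σ2 ^ 2) :=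
    Real.sq_sqrt (div_nonneg hn hd.le)
  have hcle : c ^ 2 ≤ 1 := by
    rw [hc2, div_le_one hd]; nlinarith
  have hs2 : s ^ 2 = 1 - c ^ 2 := Real.sq_sqrt (by linarith)
  have hc2' : c ^ 2 * (σ1 ^ 2 - σ2 ^ 2) = ω ^ 2 - σ2 ^ 2 := by
    rw [hc2]; field_simp
  refine ⟨?_, ?_, ?_⟩
  · simp [ΦL, ΦR, Sig, Matrix.mul_apply, Fin.sum_univ_succ]
    ring
  · simp [ΦL, ΦR, Sig, Matrix.mul_apply, Fin.sum_univ_succ]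
    field_simp
    nlinarith [hs2, hc2']
  · simp [ΦL, ΦR, Sig, Matrix.mul_apply, Fin.sum_univ_succ]
    field_simp
    linear_combination σ1 * hs2
end
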